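/- For any well-founded extensional APG X with carrier in Type u, there exists a well-founded extensional APG P with carrier in Type u such that for every well-founded extensional APG W with carrier in Type u, W ⋲ P holds if and only if every member of W is a member of X, i.e. for every well-founded extensional APG V with carrier in Type u, V ⋲ W implies V ⋲ X. (The power set axiom holds in the class of well-founded extensional APGs; this is the instance over the topos of types/sets.) -/

import Mathlib

universe u

/-- An accessible pointed graph (APG): a type with a binary relation and a root from
which every node is reachable (backwards along `Relation.ReflTransGen`). -/
structure APG : Type (u + 1) where
  carrier : Type u
  rel : carrier → carrier → Prop
  pt : carrier
  acc : ∀ z : carrier, Relation.ReflTransGen rel z pt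

/-- An APG is well-founded if its relation is. -/
def APG.WF (X : APG.{u}) : Prop := WellFounded X.rel

/-- An APG is extensional if its relation is. -/
def APG.Ext (X : APG.{u}) : Prop :=
  ∀ x y : X.carrier, (∀ z, X.rel z x ↔ X.rel z y) → x = y

/-- Isomorphism of APGs: a relation isomorphism preserving the root. -/
def APG.Iso (X Y : APG.{u}) : Prop :=
  ∃ e : X.rel ≃r Y.rel, e X.pt = Y.pt

private theorem APG.slice_acc {α : Type u} (r : α → α → Prop) (y : α)
    (z : {w : α // Relation.ReflTransGen r w y}) :
    Relation.ReflTransGen (fun a b : {w : α // Relation.ReflTransGen r w y} => r a.1 b.1)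
      z ⟨y, Relation.ReflTransGen.refl⟩ := by
  obtain ⟨a, h⟩ := z
  induction h using Relation.ReflTransGen.head_induction_on with
  | refl => exact Relation.ReflTransGen.refl
  | head h' h ih => exact Relation.ReflTransGen.head h' ih

/-- The sub-APG of `Y` determined by a node `y`: the nodes admitting a path to `y`,
rooted at `y`. -/
def APG.slice (Y : APG.{u}) (y : Y.carrier) : APG.{u} where
  carrier := {z : Y.carrier // Relation.ReflTransGen Y.rel z y}
  rel a b := Y.rel a.1 b.1
  pt := ⟨y, Relation.ReflTransGen.refl⟩
  acc z := APG.slice_acc Y.rel y z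

/-- Membership of APGs: `X ⋲ Y` iff `X` is isomorphic to `Y.slice y` for some member
(child of the root) `y` of `Y`. -/
def APG.Mem (X Y : APG.{u}) : Prop :=
  ∃ y : Y.carrier, Y.rel y Y.pt ∧ APG.Iso X (Y.slice y)

----------------------------------------------------------------
-- General lemmas about Iso and slices
----------------------------------------------------------------

namespace APG

lemma iso_refl (X : APG.{u}) : Iso X X := ⟨RelIso.refl _, rfl⟩

lemma iso_symm {X Y : APG.{u}} (h : Iso X Y) : Iso Y X := by
  obtain ⟨e, he⟩ := h
  exact ⟨e.symm, by rw [← he, e.symm_apply_apply]⟩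

lemma iso_trans {X Y Z : APG.{u}} (h : Iso X Y) (h' : Iso Y Z) : Iso X Z := by
  obtain ⟨e, he⟩ := h; obtain ⟨f, hf⟩ := h'
  exact ⟨e.trans f, by simp [RelIso.trans, Equiv.trans, he, hf]⟩

lemma slice_wf {Y : APG.{u}} (hw : Y.WF) (y : Y.carrier) : (Y.slice y).WF := by
  have h : (Y.slice y).rel = InvImage Y.rel Subtype.val := rfl
  rw [APG.WF, h]
  exact InvImage.wf _ hw

lemma slice_ext {Y : APG.{u}} (he : Y.Ext) (y : Y.carrier) : (Y.slice y).Ext := by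
  rintro ⟨a, ha⟩ ⟨b, hb⟩ h
  refine Subtype.ext (he a b (fun z => ?_))
  constructor
  · intro hz
    exact (h ⟨z, (Relation.ReflTransGen.single hz).trans ha⟩).1 hz
  · intro hz
    exact (h ⟨z, (Relation.ReflTransGen.single hz).trans hb⟩).2 hz

lemma rtg_slice {Y : APG.{u}} {y : Y.carrier} (w : (Y.slice y).carrier) :
    ∀ (v : Y.carrier), Relation.ReflTransGen Y.rel v w.1 →
      ∀ (hv : Relation.ReflTransGen Y.rel v y),
        Relation.ReflTransGen (Y.slice y).rel ⟨v, hv⟩ w := by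
  intro v h
  induction h using Relation.ReflTransGen.head_induction_on with
  | refl =>
      intro hv
      have h : (⟨w.1, hv⟩ : (Y.slice y).carrier) = w := Subtype.ext rfl
      rw [h]
  | head h' h ih =>
      intro hv
      exact Relation.ReflTransGen.head
        (show (Y.slice y).rel ⟨_, hv⟩ ⟨_, h.trans w.2⟩ from h') (ih _)

/-- slice of a slice is a slice -/
lemma slice_slice_iso (Y : APG.{u}) (y : Y.carrier) (w : (Y.slice y).carrier) :
    Iso ((Y.slice y).slice w) (Y.slice w.1) := by
  refine ⟨⟨⟨fun z => ⟨z.1.1, Relation.ReflTransGen.lift Subtype.val (fun _ _ h => h) _ _ z.2⟩,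
            fun v => ⟨⟨v.1, v.2.trans w.2⟩, rtg_slice w v.1 v.2 _⟩,
            fun z => Subtype.ext (Subtype.ext rfl), fun v => Subtype.ext rfl⟩,
          Iff.rfl⟩, Subtype.ext rfl⟩

/-- a relation iso maps slices to slices -/
lemma iso_slice {Y Z : APG.{u}} (e : Y.rel ≃r Z.rel) (y : Y.carrier) :
    Iso (Y.slice y) (Z.slice (e y)) := by
  refine ⟨⟨⟨fun v => ⟨e v.1, Relation.ReflTransGen.lift e (fun _ _ h => e.map_rel_iff.2 h) _ _ v.2⟩,
            fun v => ⟨e.symm v.1, ?_⟩,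
            fun v => Subtype.ext (e.symm_apply_apply _), fun v => Subtype.ext (e.apply_symm_apply _)⟩,
          ?_⟩, Subtype.ext rfl⟩
  · have this : Relation.ReflTransGen Y.rel (e.symm v.1) (e.symm (e y)) := Relation.ReflTransGen.lift e.symm
      (fun _ _ h => e.symm.map_rel_iff.2 h) _ _ v.2
    rwa [e.symm_apply_apply] at this
  · intro a b
    exact e.map_rel_iff

lemma mem_congr_right {V W Z : APG.{u}} (h : Iso W Z) : Mem V W → Mem V Z := by
  rintro ⟨m, hm, hVm⟩
  obtain ⟨e, he⟩ := h
  refine ⟨e m, by rw [← he]; exact e.map_rel_iff.2 hm, iso_trans hVm (iso_slice e m)⟩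

lemma mem_iff_of_iso {V W Z : APG.{u}} (h : Iso W Z) : Mem V W ↔ Mem V Z :=
  ⟨mem_congr_right h, mem_congr_right (iso_symm h)⟩

/-- Rigidity: in a WF extensional APG, two isomorphic slices have equal roots. -/
lemma slice_inj {Y : APG.{u}} (hw : Y.WF) (he : Y.Ext) :
    ∀ b b' : Y.carrier, Iso (Y.slice b) (Y.slice b') → b = b' := by
  intro b
  induction b using WellFounded.induction hw with
  | _ b IH =>
  intro b' hiso
  obtain ⟨e, hpt⟩ := hiso
  refine he b b' (fun c => ?_)
  constructor
  · intro hc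
    set n : (Y.slice b).carrier := ⟨c, Relation.ReflTransGen.single hc⟩ with hn
    have h1 : (Y.slice b').rel (e n) (Y.slice b').pt := by
      rw [← hpt]; exact e.map_rel_iff.2 (show Y.rel c b from hc)
    have h2 : Iso (Y.slice c) (Y.slice (e n).1) :=
      iso_trans (iso_symm (slice_slice_iso Y b n))
        (iso_trans (iso_slice e n) (slice_slice_iso Y b' (e n)))
    have := IH c hc (e n).1 h2
    rw [this]; exact h1
  · intro hc
    set n' : (Y.slice b').carrier := ⟨c, Relation.ReflTransGen.single hc⟩ with hn
    have hpt' : e.symm (Y.slice b').pt = (Y.slice b).pt := by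
      rw [← hpt, e.symm_apply_apply]
    have h1 : (Y.slice b).rel (e.symm n') (Y.slice b).pt := by
      rw [← hpt']; exact e.symm.map_rel_iff.2 (show Y.rel c b' from hc)
    have h2 : Iso (Y.slice (e.symm n').1) (Y.slice c) := by
      have := iso_trans (iso_symm (slice_slice_iso Y b (e.symm n')))
        (iso_trans (iso_slice e (e.symm n')) (slice_slice_iso Y b' (e (e.symm n'))))
      rwa [e.apply_symm_apply] at this
    have := IH (e.symm n').1 h1 c h2
    rw [← this]; exact h1

/-- transfer an iso of slices along a child step -/
lemma pair_transfer {A B : APG.{u}} {a : A.carrier} {b : B.carrier}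
    (h : Iso (A.slice a) (B.slice b)) {a' : A.carrier} (ha' : A.rel a' a) :
    ∃ b', B.rel b' b ∧ Iso (A.slice a') (B.slice b') := by
  obtain ⟨e, hpt⟩ := h
  set n : (A.slice a).carrier := ⟨a', Relation.ReflTransGen.single ha'⟩ with hn
  refine ⟨(e n).1, ?_, ?_⟩
  · have : (B.slice b).rel (e n) (B.slice b).pt := by
      rw [← hpt]; exact e.map_rel_iff.2 (show A.rel a' a from ha')
    exact this
  · exact iso_trans (iso_symm (slice_slice_iso A a n))
      (iso_trans (iso_slice e n) (slice_slice_iso B b (e n)))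

lemma pair_descent {A B : APG.{u}} {a : A.carrier} {b : B.carrier}
    (h : Iso (A.slice a) (B.slice b)) {a' : A.carrier}
    (ha' : Relation.ReflTransGen A.rel a' a) :
    ∃ b', Relation.ReflTransGen B.rel b' b ∧ Iso (A.slice a') (B.slice b') := by
  induction ha' using Relation.ReflTransGen.head_induction_on with
  | refl => exact ⟨b, Relation.ReflTransGen.refl, h⟩
  | head h' _ ih =>
      obtain ⟨b', hb', hiso⟩ := ih
      obtain ⟨b'', hb'', hiso'⟩ := pair_transfer hiso h'
      exact ⟨b'', (Relation.ReflTransGen.single hb'').trans hb', hiso'⟩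

/-- Mostowski-type lemma: WF extensional APGs with pointwise-isomorphic members are isomorphic -/
lemma iso_of_members {A B : APG.{u}} (hAw : A.WF) (hAe : A.Ext) (hBw : B.WF) (hBe : B.Ext)
    (H : ∀ m, A.rel m A.pt → ∃ b, B.rel b B.pt ∧ Iso (A.slice m) (B.slice b))
    (H' : ∀ b, B.rel b B.pt → ∃ m, A.rel m A.pt ∧ Iso (A.slice m) (B.slice b)) :
    Iso A B := by
  classical
  set Pair : A.carrier → B.carrier → Prop := fun a b => Iso (A.slice a) (B.slice b) with hPair
  set Spec : A.carrier → B.carrier → Prop := fun a b =>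
    (a = A.pt ∧ b = B.pt) ∨
      (Relation.TransGen A.rel a A.pt ∧ Relation.TransGen B.rel b B.pt ∧ Pair a b) with hSpec
  have exSpec : ∀ a, ∃ b, Spec a b := by
    intro a
    rcases (A.acc a).cases_tail with h | ⟨m, ham, hm⟩
    · exact ⟨B.pt, Or.inl ⟨h.symm, rfl⟩⟩
    · obtain ⟨bm, hbm, hpm⟩ := H m hm
      obtain ⟨b, hb, hp⟩ := pair_descent hpm ham
      exact ⟨b, Or.inr ⟨Relation.TransGen.tail' ham hm,
        Relation.TransGen.tail' hb hbm, hp⟩⟩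
  have exSpec' : ∀ b, ∃ a, Spec a b := by
    intro b
    rcases (B.acc b).cases_tail with h | ⟨m, hbm, hm⟩
    · exact ⟨A.pt, Or.inl ⟨rfl, h.symm⟩⟩
    · obtain ⟨am, ham, hpm⟩ := H' m hm
      obtain ⟨a, hra, hp⟩ := pair_descent (iso_symm hpm) hbm
      exact ⟨a, Or.inr ⟨Relation.TransGen.tail' hra ham,
        Relation.TransGen.tail' hbm hm, iso_symm hp⟩⟩
  have uB : ∀ a b b', Spec a b → Spec a b' → b = b' := by
    rintro a b b' (⟨ha, hb⟩ | ⟨ha, hb, hp⟩) (⟨ha', hb'⟩ | ⟨ha', hb', hp'⟩)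
    · rw [hb, hb']
    · exact absurd (ha ▸ ha') (fun h => hAw.transGen.asymmetric _ _ h h)
    · exact absurd (ha' ▸ ha) (fun h => hAw.transGen.asymmetric _ _ h h)
    · exact slice_inj hBw hBe b b' (iso_trans (iso_symm hp) hp')
  have uA : ∀ a a' b, Spec a b → Spec a' b → a = a' := by
    rintro a a' b (⟨ha, hb⟩ | ⟨ha, hb, hp⟩) (⟨ha', hb'⟩ | ⟨ha', hb', hp'⟩)
    · rw [ha, ha']
    · exact absurd (hb ▸ hb') (fun h => hBw.transGen.asymmetric _ _ h h)
    · exact absurd (hb' ▸ hb) (fun h => hBw.transGen.asymmetric _ _ h h)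
    · exact slice_inj hAw hAe a a' (iso_trans hp (iso_symm hp'))
  set f : A.carrier → B.carrier := fun a => Classical.choose (exSpec a) with hf
  have hfs : ∀ a, Spec a (f a) := fun a => Classical.choose_spec (exSpec a)
  set g : B.carrier → A.carrier := fun b => Classical.choose (exSpec' b) with hg
  have hgs : ∀ b, Spec (g b) b := fun b => Classical.choose_spec (exSpec' b)
  have hgf : ∀ a, g (f a) = a := fun a => uA _ _ _ (hgs (f a)) (hfs a)
  have hfg : ∀ b, f (g b) = b := fun b => uB _ _ _ (hfs (g b)) (hgs b)
  have hfpt : f A.pt = B.pt := uB _ _ _ (hfs A.pt) (Or.inl ⟨rfl, rfl⟩)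
  have key : ∀ a a', A.rel a' a → B.rel (f a') (f a) := by
    intro a a' ha'
    rcases hfs a with ⟨hapt, hbpt⟩ | ⟨hta, htb, hp⟩
    · subst hapt
      obtain ⟨b', hb', hp'⟩ := H a' ha'
      have : Spec a' b' := Or.inr ⟨Relation.TransGen.single ha',
        Relation.TransGen.single hb', hp'⟩
      rw [uB _ _ _ (hfs a') this, hbpt]
      exact hb'
    · obtain ⟨b', hb', hp'⟩ := pair_transfer hp ha'
      have : Spec a' b' := Or.inr ⟨Relation.TransGen.head ha' hta,
        Relation.TransGen.head hb' htb, hp'⟩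
      rw [uB _ _ _ (hfs a') this]
      exact hb'
  have key' : ∀ b b', B.rel b' b → A.rel (g b') (g b) := by
    intro b b' hb'
    rcases hgs b with ⟨hapt, hbpt⟩ | ⟨hta, htb, hp⟩
    · subst hbpt
      obtain ⟨a', ha', hp'⟩ := H' b' hb'
      have : Spec a' b' := Or.inr ⟨Relation.TransGen.single ha',
        Relation.TransGen.single hb', hp'⟩
      rw [uA _ _ _ (hgs b') this, hapt]
      exact ha'
    · obtain ⟨a', ha', hp'⟩ := pair_transfer (iso_symm hp) hb'
      have : Spec a' b' := Or.inr ⟨Relation.TransGen.head ha' hta,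
        Relation.TransGen.head hb' htb, iso_symm hp'⟩
      rw [uA _ _ _ (hgs b') this]
      exact ha'
  refine ⟨⟨⟨f, g, hgf, hfg⟩, ?_⟩, hfpt⟩
  intro a a'
  constructor
  · intro h
    have := key' _ _ h
    rwa [hgf, hgf] at this
  · exact key a' a

end APG

----------------------------------------------------------------
-- The power-set construction
----------------------------------------------------------------

namespace PowAux

variable (X : APG.{u})

/-- the members (children of the root) of `X` -/
abbrev C := {x : X.carrier // X.rel x X.pt}

/-- a set of members of `X` is a duplicate if some node of `X` (below the root)
has exactly its elements as children -/
def Dup (S : Set (C X)) : Prop :=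
  ∃ w : X.carrier, Relation.TransGen X.rel w X.pt ∧
    ∀ a : X.carrier, X.rel a w ↔ ∃ h : X.rel a X.pt, (⟨a, h⟩ : C X) ∈ S

abbrev T := {z : X.carrier // Relation.TransGen X.rel z X.pt}

/-- carrier of the power APG: a root, non-duplicate subset nodes, and
the strictly-below-the-root part of X -/
def Carrier : Type u := Unit ⊕ ({S : Set (C X) // ¬ Dup X S} ⊕ T X)

def Rel : Carrier X → Carrier X → Prop
  | .inr (.inr a), .inr (.inr b) => X.rel a.1 b.1
  | .inr (.inr a), .inr (.inl S) => ∃ h : X.rel a.1 X.pt, (⟨a.1, h⟩ : C X) ∈ S.1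
  | .inr (.inl _), .inl _ => True
  | .inr (.inr w), .inl _ => ∀ a, X.rel a w.1 → X.rel a X.pt
  | _, _ => False

/-- lifting reflexive-transitive chains of X into the T part of the power carrier -/
lemma rtg_T {v c : X.carrier} (h : Relation.ReflTransGen X.rel v c)
    (hc : Relation.TransGen X.rel c X.pt) :
    ∀ hv : Relation.TransGen X.rel v X.pt,
      Relation.ReflTransGen (Rel X) (.inr (.inr ⟨v, hv⟩)) (.inr (.inr ⟨c, hc⟩)) := by
  induction h using Relation.ReflTransGen.head_induction_on with
  | refl => intro hv; exact Relation.ReflTransGen.refl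
  | head h' h ih =>
      intro hv
      exact Relation.ReflTransGen.head
        (show Rel X (.inr (.inr ⟨_, hv⟩)) (.inr (.inr ⟨_, Relation.TransGen.trans_right h hc⟩))
          from h') (ih _)


lemma not_dup_univ (hXw : X.WF) (hXe : X.Ext) : ¬ Dup X Set.univ := by
  rintro ⟨w, hw, h⟩
  have : w = X.pt := hXe w X.pt (fun a =>
    (h a).trans ⟨fun ⟨h1, _⟩ => h1, fun h1 => ⟨h1, Set.mem_univ _⟩⟩)
  rw [this] at hw
  exact hXw.transGen.asymmetric _ _ hw hw

lemma P_acc (hXw : X.WF) (hXe : X.Ext) :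
    ∀ z : Carrier X, Relation.ReflTransGen (Rel X) z (.inl ()) := by
  rintro (u | S | w)
  · cases u; exact Relation.ReflTransGen.refl
  · exact Relation.ReflTransGen.single trivial
  · obtain ⟨w, hw⟩ := w
    obtain ⟨c, hwc, hc⟩ := (Relation.TransGen.tail'_iff).1 hw
    refine (rtg_T X hwc (Relation.TransGen.single hc) hw).trans ?_
    refine Relation.ReflTransGen.head
      (show Rel X (.inr (.inr ⟨c, Relation.TransGen.single hc⟩))
        (.inr (.inl ⟨Set.univ, not_dup_univ X hXw hXe⟩)) from ⟨hc, Set.mem_univ _⟩) ?_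
    exact Relation.ReflTransGen.single trivial

/-- the power APG -/
def P (hXw : X.WF) (hXe : X.Ext) : APG.{u} where
  carrier := Carrier X
  rel := Rel X
  pt := .inl ()
  acc := P_acc X hXw hXe

variable (hXw : X.WF) (hXe : X.Ext)

lemma P_wf : (P X hXw hXe).WF := by
  refine WellFounded.intro ?_
  have hT : ∀ (v : X.carrier) (hv : Relation.TransGen X.rel v X.pt),
      Acc (Rel X) (.inr (.inr ⟨v, hv⟩)) := by
    intro v
    induction v using WellFounded.induction hXw with
    | _ v IH =>
    intro hv
    refine Acc.intro _ (fun z hz => ?_)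
    rcases z with u | S | a
    · exact hz.elim
    · exact hz.elim
    · obtain ⟨a, ha⟩ := a
      exact IH a hz ha
  have hS : ∀ S, Acc (Rel X) (.inr (.inl S)) := by
    intro S
    refine Acc.intro _ (fun z hz => ?_)
    rcases z with u | S' | a
    · exact hz.elim
    · exact hz.elim
    · obtain ⟨a, ha⟩ := a; exact hT a ha
  rintro (u | S | a)
  · refine Acc.intro _ (fun z hz => ?_)
    rcases z with u' | S' | a
    · exact hz.elim
    · exact hS S'
    · obtain ⟨a, ha⟩ := a; exact hT a ha
  · exact hS S
  · obtain ⟨a, ha⟩ := a; exact hT a ha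

lemma P_ext : (P X hXw hXe).Ext := by
  rintro (u | S | a) (u' | S' | a') h
  · cases u; cases u'; rfl
  · exact ((h (.inr (.inl ⟨Set.univ, not_dup_univ X hXw hXe⟩))).1 trivial).elim
  · exact ((h (.inr (.inl ⟨Set.univ, not_dup_univ X hXw hXe⟩))).1 trivial).elim
  · exact ((h (.inr (.inl ⟨Set.univ, not_dup_univ X hXw hXe⟩))).2 trivial).elim
  · -- S vs S'
    have : S = S' := by
      refine Subtype.ext (Set.ext (fun c => ?_))
      have h1 := h (.inr (.inr ⟨c.1, Relation.TransGen.single c.2⟩))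
      constructor
      · intro hc
        obtain ⟨h2, h3⟩ := h1.1 ⟨c.2, by rwa [show (⟨c.1, c.2⟩ : C X) = c from Subtype.ext rfl]⟩
        rwa [show (⟨c.1, h2⟩ : C X) = c from Subtype.ext rfl] at h3
      · intro hc
        obtain ⟨h2, h3⟩ := h1.2 ⟨c.2, by rwa [show (⟨c.1, c.2⟩ : C X) = c from Subtype.ext rfl]⟩
        rwa [show (⟨c.1, h2⟩ : C X) = c from Subtype.ext rfl] at h3
    rw [this]
  · -- S vs T-node a' : contradiction, a' witnesses Dup S
    exfalso
    refine S.2 ⟨a'.1, a'.2, fun b => ?_⟩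
    constructor
    · intro hb
      exact (h (.inr (.inr ⟨b, Relation.TransGen.head hb a'.2⟩))).2 hb
    · intro ⟨hb, hbS⟩
      exact (h (.inr (.inr ⟨b, Relation.TransGen.single hb⟩))).1 ⟨hb, hbS⟩
  · exact ((h (.inr (.inl ⟨Set.univ, not_dup_univ X hXw hXe⟩))).2 trivial).elim
  · -- T-node a vs S' : symmetric
    exfalso
    refine S'.2 ⟨a.1, a.2, fun b => ?_⟩
    constructor
    · intro hb
      exact (h (.inr (.inr ⟨b, Relation.TransGen.head hb a.2⟩))).1 hb
    · intro ⟨hb, hbS⟩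
      exact (h (.inr (.inr ⟨b, Relation.TransGen.single hb⟩))).2 ⟨hb, hbS⟩
  · -- T vs T
    have : a = a' := by
      refine Subtype.ext (hXe a.1 a'.1 (fun b => ?_))
      constructor
      · intro hb
        exact (h (.inr (.inr ⟨b, Relation.TransGen.head hb a.2⟩))).1 hb
      · intro hb
        exact (h (.inr (.inr ⟨b, Relation.TransGen.head hb a'.2⟩))).2 hb
    rw [this]

lemma rtg_to_T (w : T X) : ∀ z, Relation.ReflTransGen (Rel X) z (.inr (.inr w)) →
    ∃ (v : X.carrier) (hv : Relation.TransGen X.rel v X.pt),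
      z = Sum.inr (Sum.inr ⟨v, hv⟩) ∧ Relation.ReflTransGen X.rel v w.1 := by
  intro z hz
  induction hz using Relation.ReflTransGen.head_induction_on with
  | refl => exact ⟨w.1, w.2, rfl, Relation.ReflTransGen.refl⟩
  | @head z' c h' hrest ih =>
      obtain ⟨v, hv, rfl, hvw⟩ := ih
      rcases z' with u | S | a
      · exact h'.elim
      · exact h'.elim
      · obtain ⟨a, ha⟩ := a
        exact ⟨a, ha, rfl, Relation.ReflTransGen.head h' hvw⟩

/-- the canonical map from a slice of X into the corresponding slice of the power APG -/
def toT (w : T X) (v : (X.slice w.1).carrier) :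
    ((P X hXw hXe).slice (.inr (.inr w))).carrier :=
  ⟨.inr (.inr ⟨v.1, Relation.TransGen.trans_right v.2 w.2⟩), rtg_T X v.2 w.2 _⟩

lemma toT_bij (w : T X) : Function.Bijective (toT X hXw hXe w) := by
  constructor
  · intro a b hab
    have h1 := congrArg Subtype.val hab
    simp only [toT] at h1
    injection h1 with h1
    injection h1 with h1
    injection h1 with h1
    exact Subtype.ext h1
  · intro z
    obtain ⟨v, hv, hz, hvw⟩ := rtg_to_T X w z.1 z.2
    refine ⟨⟨v, hvw⟩, Subtype.ext ?_⟩
    simp only [toT]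
    exact hz.symm

/-- slices of the power APG at T-nodes are the corresponding slices of X -/
lemma slice_T_iso (w : T X) :
    APG.Iso ((P X hXw hXe).slice (.inr (.inr w))) (X.slice w.1) := by
  refine APG.iso_symm ?_
  refine ⟨⟨Equiv.ofBijective _ (toT_bij X hXw hXe w), ?_⟩, Subtype.ext rfl⟩
  intro a b
  exact Iff.rfl

end PowAux

/-- Power set for well-founded extensional APGs. -/
theorem apg_powerset (X : APG.{u}) (hXw : X.WF) (hXe : X.Ext) :
    ∃ P : APG.{u}, P.WF ∧ P.Ext ∧
      ∀ W : APG.{u}, W.WF → W.Ext →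
        (APG.Mem W P ↔
          ∀ V : APG.{u}, V.WF → V.Ext → APG.Mem V W → APG.Mem V X) := by
  classical
  refine ⟨PowAux.P X hXw hXe, PowAux.P_wf X hXw hXe, PowAux.P_ext X hXw hXe, ?_⟩
  intro W hWw hWe
  constructor
  · -- forward: members of W are members of X
    rintro ⟨y, hy, hiso⟩ V hVw hVe hVW
    obtain ⟨b, hb, hVb⟩ := APG.mem_congr_right hiso hVW
    obtain ⟨z, hzy⟩ := b
    have hVb1 : APG.Iso V ((PowAux.P X hXw hXe).slice z) :=
      APG.iso_trans hVb (APG.slice_slice_iso _ y ⟨z, hzy⟩)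
    rcases y with u | S | w
    · exact hy.elim
    · rcases z with u' | S' | a
      · exact hb.elim
      · exact hb.elim
      · obtain ⟨h, _⟩ := hb
        exact ⟨a.1, h, APG.iso_trans hVb1 (PowAux.slice_T_iso X hXw hXe a)⟩
    · rcases z with u' | S' | a
      · exact hb.elim
      · exact hb.elim
      · exact ⟨a.1, hy a.1 hb, APG.iso_trans hVb1 (PowAux.slice_T_iso X hXw hXe a)⟩
  · -- backward
    intro hmem
    set S : Set (PowAux.C X) :=
      {c | ∃ m, W.rel m W.pt ∧ APG.Iso (W.slice m) (X.slice c.1)} with hSdef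
    have hmm : ∀ m, W.rel m W.pt →
        ∃ c : PowAux.C X, c ∈ S ∧ APG.Iso (W.slice m) (X.slice c.1) := by
      intro m hm
      obtain ⟨x, hx, hiso⟩ := hmem (W.slice m) (APG.slice_wf hWw m) (APG.slice_ext hWe m)
        ⟨m, hm, APG.iso_refl _⟩
      exact ⟨⟨x, hx⟩, ⟨m, hm, hiso⟩, hiso⟩
    by_cases hdup : PowAux.Dup X S
    · obtain ⟨w, hwT, hw⟩ := hdup
      have hy : (PowAux.P X hXw hXe).rel (.inr (.inr ⟨w, hwT⟩)) (PowAux.P X hXw hXe).pt :=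
        fun a ha => ((hw a).1 ha).choose
      have hWX : APG.Iso W (X.slice w) := by
        refine APG.iso_of_members hWw hWe (APG.slice_wf hXw w) (APG.slice_ext hXe w) ?_ ?_
        · intro m hm
          obtain ⟨c, hcS, hciso⟩ := hmm m hm
          have hcw : X.rel c.1 w := (hw c.1).2 ⟨c.2, hcS⟩
          refine ⟨⟨c.1, Relation.ReflTransGen.single hcw⟩, hcw, ?_⟩
          exact APG.iso_trans hciso
            (APG.iso_symm (APG.slice_slice_iso X w ⟨c.1, Relation.ReflTransGen.single hcw⟩))
        · intro b hb
          obtain ⟨h, hbS⟩ := (hw b.1).1 hb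
          obtain ⟨m, hm, hmiso⟩ := hbS
          exact ⟨m, hm, APG.iso_trans hmiso (APG.iso_symm (APG.slice_slice_iso X w b))⟩
      exact ⟨.inr (.inr ⟨w, hwT⟩), hy,
        APG.iso_trans hWX (APG.iso_symm (PowAux.slice_T_iso X hXw hXe ⟨w, hwT⟩))⟩
    · set y : PowAux.Carrier X := .inr (.inl ⟨S, hdup⟩) with hydef
      have hWP : APG.Iso W ((PowAux.P X hXw hXe).slice y) := by
        refine APG.iso_of_members hWw hWe
          (APG.slice_wf (PowAux.P_wf X hXw hXe) y) (APG.slice_ext (PowAux.P_ext X hXw hXe) y) ?_ ?_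
        · intro m hm
          obtain ⟨c, hcS, hciso⟩ := hmm m hm
          have hstep : PowAux.Rel X (.inr (.inr ⟨c.1, Relation.TransGen.single c.2⟩)) y :=
            ⟨c.2, hcS⟩
          refine ⟨⟨.inr (.inr ⟨c.1, Relation.TransGen.single c.2⟩),
            Relation.ReflTransGen.single hstep⟩, hstep, ?_⟩
          refine APG.iso_trans hciso (APG.iso_symm ?_)
          exact APG.iso_trans
            (APG.slice_slice_iso (PowAux.P X hXw hXe) y
              ⟨.inr (.inr ⟨c.1, Relation.TransGen.single c.2⟩), Relation.ReflTransGen.single hstep⟩)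
            (PowAux.slice_T_iso X hXw hXe ⟨c.1, Relation.TransGen.single c.2⟩)
        · intro b hb
          obtain ⟨z, hzy⟩ := b
          rcases z with u' | S' | a
          · exact hb.elim
          · exact hb.elim
          · obtain ⟨h, haS⟩ := hb
            obtain ⟨m, hm, hmiso⟩ := haS
            refine ⟨m, hm, ?_⟩
            refine APG.iso_trans hmiso (APG.iso_symm ?_)
            exact APG.iso_trans
              (APG.slice_slice_iso (PowAux.P X hXw hXe) y ⟨.inr (.inr a), hzy⟩)
              (PowAux.slice_T_iso X hXw hXe a)
      exact ⟨y, trivial, hWP⟩
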